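/- arXiv:1701.04165 — 8 statements merged into one kernel-verified Lean document; each statement's English description precedes it below -/
import Mathlib

section
/- For every positive integer m, there exists a binary [6m+1, 2, 4m] LCD code; hence LCD[6m+1,2] = ⌊2(6m+1)/3⌋. -/
open Matrix

/-- The dual code of a binary linear code `C ⊆ GF(2)^n` under the standard bilinear form. -/
def dualCode {n : ℕ} (C : Submodule (ZMod 2) (Fin n → ZMod 2)) :
    Submodule (ZMod 2) (Fin n → ZMod 2) where
  carrier := {v | ∀ c ∈ C, v ⬝ᵥ c = 0}
  add_mem' := by
    intro a b ha hb c hc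
    simp [add_dotProduct, ha c hc, hb c hc]
  zero_mem' := by
    intro c hc
    simp
  smul_mem' := by
    intro r a ha c hc
    simp [smul_dotProduct, ha c hc]

/-- A linear code is LCD if it intersects its dual trivially. -/
def isLCD {n : ℕ} (C : Submodule (ZMod 2) (Fin n → ZMod 2)) : Prop :=
  C ⊓ dualCode C = ⊥

/-- `C` has minimum distance `d`: every nonzero codeword has Hamming weight at least `d`,
and some nonzero codeword has Hamming weight exactly `d`. -/
def hasMinDist {n : ℕ} (C : Submodule (ZMod 2) (Fin n → ZMod 2)) (d : ℕ) : Prop :=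
  (∀ v ∈ C, v ≠ 0 → d ≤ hammingNorm v) ∧ ∃ v ∈ C, v ≠ 0 ∧ hammingNorm v = d

/-- `LCDmax n k` is the largest minimum distance among binary `[n,k]` LCD codes. -/
noncomputable def LCDmax (n k : ℕ) : ℕ :=
  sSup {d | ∃ C : Submodule (ZMod 2) (Fin n → ZMod 2),
    Module.finrank (ZMod 2) ↥C = k ∧ hasMinDist C d ∧ isLCD C}


private lemma hn_eq {n : ℕ} (v : Fin n → ZMod 2) :
    hammingNorm v = (Finset.univ.filter fun i => v i ≠ 0).card := rfl

private lemma card_filter_iff (n a b : ℕ) (hb : b ≤ n) (p : Fin n → Prop) [DecidablePred p]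
    (hp : ∀ i : Fin n, p i ↔ a ≤ i.val ∧ i.val < b) :
    (Finset.univ.filter p).card = b - a := by
  rw [Finset.filter_congr (fun i _ => hp i), ← Nat.card_Ico a b]
  apply Finset.card_bij (fun i _ => i.val)
  · intro i hi; simp only [Finset.mem_filter] at hi; simp [Finset.mem_Ico, hi.2]
  · intro i _ j _ h; exact Fin.val_injective h
  · intro x hx
    simp only [Finset.mem_Ico] at hx
    exact ⟨⟨x, lt_of_lt_of_le hx.2 hb⟩, by simp [hx.1, hx.2], rfl⟩

private def gA (m : ℕ) : Fin (6*m+1) → ZMod 2 := fun i => if i.val < 4*m then 1 else 0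
private def gB (m : ℕ) : Fin (6*m+1) → ZMod 2 := fun i => if 2*m+1 ≤ i.val then 1 else 0

variable {m : ℕ}

private lemma wA (hm : 1 ≤ m) : hammingNorm (gA m) = 4*m := by
  rw [hn_eq]
  have := card_filter_iff (6*m+1) 0 (4*m) (by omega) (fun i => gA m i ≠ 0)
    (fun i => by simp only [gA]; split_ifs with h <;> simp <;> omega)
  omega

private lemma wB (hm : 1 ≤ m) : hammingNorm (gB m) = 4*m := by
  rw [hn_eq]
  have := card_filter_iff (6*m+1) (2*m+1) (6*m+1) (by omega) (fun i => gB m i ≠ 0)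
    (fun i => by simp only [gB]; split_ifs with h <;> simp <;> omega)
  omega

private lemma wAB (hm : 1 ≤ m) : hammingNorm (gA m + gB m) = 4*m + 2 := by
  rw [hn_eq]
  have key := Finset.card_filter_add_card_filter_not
    (s := (Finset.univ : Finset (Fin (6*m+1)))) (fun i => 2*m+1 ≤ i.val ∧ i.val < 4*m)
  have h1 : (Finset.univ.filter fun i : Fin (6*m+1) => 2*m+1 ≤ i.val ∧ i.val < 4*m).card
      = 2*m - 1 := by
    have := card_filter_iff (6*m+1) (2*m+1) (4*m) (by omega)
      (fun i : Fin (6*m+1) => 2*m+1 ≤ i.val ∧ i.val < 4*m) (fun i => Iff.rfl)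
    omega
  have h2 : (Finset.univ.filter fun i => gA m i + gB m i ≠ 0) =
      (Finset.univ.filter fun i : Fin (6*m+1) => ¬(2*m+1 ≤ i.val ∧ i.val < 4*m)) := by
    apply Finset.filter_congr
    intro i _
    simp only [gA, gB]
    by_cases hA : (i:ℕ) < 4*m <;> by_cases hB : 2*m+1 ≤ (i:ℕ)
    · rw [if_pos hA, if_pos hB]
      have h11 : (1:ZMod 2) + 1 = 0 := rfl
      simp [h11]; omega
    · rw [if_pos hA, if_neg hB]; simp; omega
    · rw [if_neg hA, if_pos hB]; simp; omega
    · exfalso; omega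
  have hcard : (Finset.univ : Finset (Fin (6*m+1))).card = 6*m+1 := by simp
  have : (Finset.univ.filter fun i => (gA m + gB m) i ≠ 0) =
      (Finset.univ.filter fun i => gA m i + gB m i ≠ 0) := rfl
  rw [this, h2]
  omega

private lemma gA0 (hm : 1 ≤ m) : gA m ⟨0, by omega⟩ = 1 := by simp [gA]; omega
private lemma gB0 (hm : 1 ≤ m) : gB m ⟨0, by omega⟩ = 0 := by simp [gB]
private lemma gAlast (hm : 1 ≤ m) : gA m ⟨6*m, by omega⟩ = 0 := by simp [gA]; omega
private lemma gBlast (hm : 1 ≤ m) : gB m ⟨6*m, by omega⟩ = 1 := by simp [gB]; omega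

private lemma gA_ne (hm : 1 ≤ m) : gA m ≠ 0 := fun h => by
  have := congrFun h ⟨0, by omega⟩; rw [gA0 hm] at this; exact one_ne_zero this

private lemma gB_ne (hm : 1 ≤ m) : gB m ≠ 0 := fun h => by
  have := congrFun h ⟨6*m, by omega⟩; rw [gBlast hm] at this; exact one_ne_zero this

private lemma gAB_ne (hm : 1 ≤ m) : gA m + gB m ≠ 0 := fun h => by
  have := congrFun h ⟨0, by omega⟩
  rw [Pi.add_apply, gA0 hm, gB0 hm] at this
  simp at this

private lemma prod_ite (P Q : Prop) [Decidable P] [Decidable Q] :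
    (if P then (1:ZMod 2) else 0) * (if Q then 1 else 0) = if P ∧ Q then 1 else 0 := by
  split_ifs <;> simp_all

private lemma dAA (hm : 1 ≤ m) : gA m ⬝ᵥ gA m = 0 := by
  have : gA m ⬝ᵥ gA m = ∑ i : Fin (6*m+1), if (i.val < 4*m ∧ i.val < 4*m) then (1:ZMod 2) else 0 := by
    apply Finset.sum_congr rfl; intro i _; exact prod_ite _ _
  rw [this, Finset.sum_boole,
    card_filter_iff (6*m+1) 0 (4*m) (by omega) (fun i : Fin (6*m+1) => i.val < 4*m ∧ i.val < 4*m) (fun i => by constructor <;> intro h <;> omega)]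
  have h4 : (4*m - 0) % 2 = 0 := by omega
  rw [← ZMod.natCast_mod, h4]; simp

private lemma dBB (hm : 1 ≤ m) : gB m ⬝ᵥ gB m = 0 := by
  have : gB m ⬝ᵥ gB m = ∑ i : Fin (6*m+1), if (2*m+1 ≤ i.val ∧ 2*m+1 ≤ i.val) then (1:ZMod 2) else 0 := by
    apply Finset.sum_congr rfl; intro i _; exact prod_ite _ _
  rw [this, Finset.sum_boole,
    card_filter_iff (6*m+1) (2*m+1) (6*m+1) (by omega)
      (fun i : Fin (6*m+1) => 2*m+1 ≤ i.val ∧ 2*m+1 ≤ i.val)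
      (fun i => by have := i.isLt; constructor <;> intro h <;> omega)]
  have h4 : (6*m+1 - (2*m+1)) % 2 = 0 := by omega
  rw [← ZMod.natCast_mod, h4]; simp

private lemma dAB (hm : 1 ≤ m) : gA m ⬝ᵥ gB m = 1 := by
  have : gA m ⬝ᵥ gB m = ∑ i : Fin (6*m+1), if (i.val < 4*m ∧ 2*m+1 ≤ i.val) then (1:ZMod 2) else 0 := by
    apply Finset.sum_congr rfl; intro i _; exact prod_ite _ _
  rw [this, Finset.sum_boole,
    card_filter_iff (6*m+1) (2*m+1) (4*m) (by omega)
      (fun i : Fin (6*m+1) => i.val < 4*m ∧ 2*m+1 ≤ i.val)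
      (fun i => by constructor <;> intro h <;> omega)]
  have h4 : (4*m - (2*m+1)) % 2 = 1 := by omega
  rw [← ZMod.natCast_mod, h4]; simp

private lemma gindep (hm : 1 ≤ m) : LinearIndependent (ZMod 2) ![gA m, gB m] := by
  rw [LinearIndependent.pair_iff]
  intro s t h
  have h0 := congrFun h ⟨0, by omega⟩
  have h1 := congrFun h ⟨6*m, by omega⟩
  simp only [Pi.add_apply, Pi.smul_apply, smul_eq_mul, Pi.zero_apply] at h0 h1
  rw [gA0 hm, gB0 hm] at h0
  rw [gAlast hm, gBlast hm] at h1
  simp at h0 h1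
  exact ⟨h0, h1⟩
private lemma add_eq_zero_zmod2 {n : ℕ} {v w : Fin n → ZMod 2} (h : v + w = 0) : v = w := by
  funext i
  have := congrFun h i
  simp only [Pi.add_apply, Pi.zero_apply] at this
  revert this
  generalize v i = a; generalize w i = b
  revert a b; decide

/-- Plotkin-style bound for 2-dimensional binary codes. -/
private lemma dist_bound {n d : ℕ} (C : Submodule (ZMod 2) (Fin n → ZMod 2))
    (hrk : Module.finrank (ZMod 2) ↥C = 2) (hd : hasMinDist C d) : 3 * d ≤ 2 * n := by
  obtain ⟨v, hvC, hv0, -⟩ := hd.2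
  -- get a second nonzero element distinct from v
  have : ∃ w ∈ C, w ≠ 0 ∧ w ≠ v := by
    by_contra hcon
    push_neg at hcon
    have hle : C ≤ Submodule.span (ZMod 2) {v} := by
      intro x hx
      by_cases hx0 : x = 0
      · simp [hx0]
      · rw [hcon x hx hx0]
        exact Submodule.mem_span_singleton_self v
    have h1 := Submodule.finrank_mono hle
    rw [hrk, finrank_span_singleton hv0] at h1
    omega
  obtain ⟨w, hwC, hw0, hwv⟩ := this
  have hvw0 : v + w ≠ 0 := fun h => hwv (add_eq_zero_zmod2 h).symm
  have h1 := hd.1 v hvC hv0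
  have h2 := hd.1 w hwC hw0
  have h3 := hd.1 (v + w) (C.add_mem hvC hwC) hvw0
  have hsum : hammingNorm v + hammingNorm w + hammingNorm (v + w) ≤ 2 * n := by
    rw [hn_eq, hn_eq, hn_eq, Finset.card_filter, Finset.card_filter, Finset.card_filter,
      ← Finset.sum_add_distrib, ← Finset.sum_add_distrib]
    calc _ ≤ ∑ _i : Fin n, 2 := by
            apply Finset.sum_le_sum
            intro i _
            simp only [Pi.add_apply]
            have tri : ∀ a b : ZMod 2, ((if a ≠ 0 then 1 else 0) + if b ≠ 0 then 1 else 0) + (if a + b ≠ 0 then (1:ℕ) else 0) ≤ 2 := by decide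
            exact tri (v i) (w i)
      _ = 2 * n := by simp [mul_comm]
  omega

private lemma rangePair {m : ℕ} : Set.range ![gA m, gB m] = {gA m, gB m} := by
  ext z; simp [Fin.exists_fin_two]; tauto

private lemma rankC (hm : 1 ≤ m) :
    Module.finrank (ZMod 2) ↥(Submodule.span (ZMod 2) {gA m, gB m}) = 2 := by
  have h := finrank_span_eq_card (gindep hm)
  rw [rangePair] at h
  simpa using h

private lemma memC (hm : 1 ≤ m) {v : Fin (6*m+1) → ZMod 2}
    (hv : v ∈ Submodule.span (ZMod 2) {gA m, gB m}) :
    v = 0 ∨ v = gA m ∨ v = gB m ∨ v = gA m + gB m := by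
  obtain ⟨a, b, hab⟩ := Submodule.mem_span_pair.1 hv
  have hcase : ∀ c : ZMod 2, c = 0 ∨ c = 1 := by decide
  rcases hcase a with ha | ha <;> rcases hcase b with hb | hb <;>
    rw [ha, hb] at hab <;>
    simp only [zero_smul, one_smul, add_zero, zero_add] at hab <;> tauto

private lemma minC (hm : 1 ≤ m) :
    hasMinDist (Submodule.span (ZMod 2) {gA m, gB m}) (4*m) := by
  constructor
  · intro v hv hv0
    rcases memC hm hv with h | h | h | h
    · exact absurd h hv0
    · rw [h, wA hm]
    · rw [h, wB hm]
    · rw [h, wAB hm]; omega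
  · exact ⟨gA m, Submodule.subset_span (by simp), gA_ne hm, wA hm⟩

private lemma lcdC (hm : 1 ≤ m) : isLCD (Submodule.span (ZMod 2) {gA m, gB m}) := by
  rw [isLCD, eq_bot_iff]
  intro v hv
  rw [Submodule.mem_inf] at hv
  obtain ⟨hv1, hv2⟩ := hv
  have hgA : gA m ∈ Submodule.span (ZMod 2) {gA m, gB m} := Submodule.subset_span (by simp)
  have hgB : gB m ∈ Submodule.span (ZMod 2) {gA m, gB m} := Submodule.subset_span (by simp)
  rcases memC hm hv1 with h | h | h | h
  · simp [h]
  · have := hv2 (gB m) hgB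
    rw [h, dAB hm] at this
    exact absurd this one_ne_zero
  · have := hv2 (gA m) hgA
    rw [h, dotProduct_comm, dAB hm] at this
    exact absurd this one_ne_zero
  · have := hv2 (gA m) hgA
    rw [h, add_dotProduct, dAA hm, dotProduct_comm, dAB hm] at this
    simp at this

/-- For every positive integer `m` there is a binary `[6m+1, 2, 4m]` LCD code;
hence `LCD[6m+1, 2] = ⌊2(6m+1)/3⌋`. -/
theorem lcd_6m_add_one (m : ℕ) (hm : 1 ≤ m) :
    (∃ C : Submodule (ZMod 2) (Fin (6 * m + 1) → ZMod 2),
      Module.finrank (ZMod 2) ↥C = 2 ∧ hasMinDist C (4 * m) ∧ isLCD C) ∧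
    LCDmax (6 * m + 1) 2 = 2 * (6 * m + 1) / 3 := by
  have hex : ∃ C : Submodule (ZMod 2) (Fin (6 * m + 1) → ZMod 2),
      Module.finrank (ZMod 2) ↥C = 2 ∧ hasMinDist C (4 * m) ∧ isLCD C :=
    ⟨Submodule.span (ZMod 2) {gA m, gB m}, rankC hm, minC hm, lcdC hm⟩
  refine ⟨hex, ?_⟩
  have h4m : 2 * (6 * m + 1) / 3 = 4 * m := by omega
  rw [h4m, LCDmax]
  apply le_antisymm
  · apply csSup_le ⟨4 * m, hex⟩
    rintro d ⟨D, hrk, hmin, -⟩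
    have := dist_bound D hrk hmin
    omega
  · refine le_csSup ⟨4 * m, ?_⟩ hex
    rintro d ⟨D, hrk, hmin, -⟩
    have := dist_bound D hrk hmin
    omega
end

section
/- For every nonnegative integer m, there exists a binary [6m+2, 2, 4m+1] LCD code; hence LCD[6m+2,2] = ⌊2(6m+2)/3⌋. -/
open Matrix

/- ### Auxiliary lemmas -/

lemma fin_filter_card {n : ℕ} (p : ℕ → Prop) [DecidablePred p] :
    (Finset.univ.filter fun i : Fin n => p i.val).card = ((Finset.range n).filter p).card := by
  rw [Finset.card_filter, Finset.card_filter,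
    Fin.sum_univ_eq_sum_range (fun i => if p i then 1 else 0)]

lemma zmod2_cases : ∀ a : ZMod 2, a = 0 ∨ a = 1 := by decide

/-- the first generator: `1^{4m+1} 0^{2m+1}` -/
def genU (m : ℕ) : Fin (6 * m + 2) → ZMod 2 := fun i => if (i : ℕ) < 4 * m + 1 then 1 else 0

/-- the second generator: `0^{2m+1} 1^{4m+1}` -/
def genV (m : ℕ) : Fin (6 * m + 2) → ZMod 2 := fun i => if 2 * m + 1 ≤ (i : ℕ) then 1 else 0

lemma cardU (m : ℕ) :
    (Finset.univ.filter fun i : Fin (6*m+2) => (i:ℕ) < 4*m+1).card = 4*m+1 := by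
  rw [fin_filter_card (p := fun i => i < 4*m+1), Finset.range_eq_Ico, Finset.Ico_filter_lt,
    Nat.card_Ico]
  omega

lemma cardV (m : ℕ) :
    (Finset.univ.filter fun i : Fin (6*m+2) => 2*m+1 ≤ (i:ℕ)).card = 4*m+1 := by
  rw [fin_filter_card (p := fun i => 2*m+1 ≤ i), Finset.range_eq_Ico, Finset.Ico_filter_le,
    Nat.card_Ico]
  omega

lemma cardUV (m : ℕ) :
    (Finset.univ.filter fun i : Fin (6*m+2) => (i:ℕ) < 4*m+1 ∧ 2*m+1 ≤ (i:ℕ)).card = 2*m := by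
  rw [fin_filter_card (p := fun i => i < 4*m+1 ∧ 2*m+1 ≤ i)]
  rw [show ((Finset.range (6*m+2)).filter fun i => i < 4*m+1 ∧ 2*m+1 ≤ i)
      = ((Finset.range (6*m+2)).filter (· < 4*m+1)).filter (2*m+1 ≤ ·) by
    rw [Finset.filter_filter]]
  rw [Finset.range_eq_Ico, Finset.Ico_filter_lt, Finset.Ico_filter_le, Nat.card_Ico]
  omega

lemma cardSum (m : ℕ) :
    (Finset.univ.filter fun i : Fin (6*m+2) =>
      ¬((i:ℕ) < 4*m+1 ∧ 2*m+1 ≤ (i:ℕ))).card = 4*m+2 := by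
  rw [fin_filter_card (p := fun i => ¬(i < 4*m+1 ∧ 2*m+1 ≤ i)), Finset.filter_not,
    Finset.card_sdiff_of_subset (Finset.filter_subset _ _)]
  rw [show ((Finset.range (6*m+2)).filter fun i => i < 4*m+1 ∧ 2*m+1 ≤ i)
      = ((Finset.range (6*m+2)).filter (· < 4*m+1)).filter (2*m+1 ≤ ·) by
    rw [Finset.filter_filter]]
  rw [Finset.range_eq_Ico, Finset.Ico_filter_lt, Finset.Ico_filter_le, Nat.card_Ico,
    Nat.card_Ico]
  omega

lemma normU (m : ℕ) : hammingNorm (genU m) = 4*m+1 := by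
  rw [show hammingNorm (genU m)
      = (Finset.univ.filter fun i : Fin (6*m+2) => genU m i ≠ 0).card from rfl]
  rw [Finset.filter_congr (q := fun i : Fin (6*m+2) => (i:ℕ) < 4*m+1)
    (fun i _ => by unfold genU; split <;> simp_all)]
  exact cardU m

lemma normV (m : ℕ) : hammingNorm (genV m) = 4*m+1 := by
  rw [show hammingNorm (genV m)
      = (Finset.univ.filter fun i : Fin (6*m+2) => genV m i ≠ 0).card from rfl]
  rw [Finset.filter_congr (q := fun i : Fin (6*m+2) => 2*m+1 ≤ (i:ℕ))
    (fun i _ => by unfold genV; split <;> simp_all)]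
  exact cardV m

lemma normUV (m : ℕ) : hammingNorm (genU m + genV m) = 4*m+2 := by
  rw [show hammingNorm (genU m + genV m)
      = (Finset.univ.filter fun i : Fin (6*m+2) => (genU m + genV m) i ≠ 0).card from rfl]
  rw [Finset.filter_congr (q := fun i : Fin (6*m+2) => ¬((i:ℕ) < 4*m+1 ∧ 2*m+1 ≤ (i:ℕ)))
    (fun i _ => by
      simp only [Pi.add_apply]
      unfold genU genV
      by_cases h1 : (i:ℕ) < 4*m+1 <;> by_cases h2 : 2*m+1 ≤ (i:ℕ) <;>
        simp [h1, h2, show (1+1 : ZMod 2) = 0 from rfl] <;> omega)]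
  exact cardSum m

lemma dotUU (m : ℕ) : genU m ⬝ᵥ genU m = 1 := by
  unfold dotProduct
  calc (∑ i, genU m i * genU m i)
      = ∑ i : Fin (6*m+2), if (i:ℕ) < 4*m+1 then (1 : ZMod 2) else 0 := by
        apply Finset.sum_congr rfl; intro i _; unfold genU; split <;> simp
    _ = ((Finset.univ.filter fun i : Fin (6*m+2) => (i:ℕ) < 4*m+1).card : ZMod 2) := by
        rw [Finset.sum_boole]
    _ = 1 := by
        rw [cardU]; push_cast
        rw [show ((4 : ZMod 2)) = 0 by decide]; ring

lemma dotVV (m : ℕ) : genV m ⬝ᵥ genV m = 1 := by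
  unfold dotProduct
  calc (∑ i, genV m i * genV m i)
      = ∑ i : Fin (6*m+2), if 2*m+1 ≤ (i:ℕ) then (1 : ZMod 2) else 0 := by
        apply Finset.sum_congr rfl; intro i _; unfold genV; split <;> simp
    _ = ((Finset.univ.filter fun i : Fin (6*m+2) => 2*m+1 ≤ (i:ℕ)).card : ZMod 2) := by
        rw [Finset.sum_boole]
    _ = 1 := by
        rw [cardV]; push_cast
        rw [show ((4 : ZMod 2)) = 0 by decide]; ring

lemma dotUV (m : ℕ) : genU m ⬝ᵥ genV m = 0 := by
  unfold dotProduct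
  calc (∑ i, genU m i * genV m i)
      = ∑ i : Fin (6*m+2), if (i:ℕ) < 4*m+1 ∧ 2*m+1 ≤ (i:ℕ) then (1 : ZMod 2) else 0 := by
        apply Finset.sum_congr rfl; intro i _; unfold genU genV
        by_cases h1 : (i:ℕ) < 4*m+1 <;> by_cases h2 : 2*m+1 ≤ (i:ℕ) <;>
          simp [h1, h2]
    _ = ((Finset.univ.filter fun i : Fin (6*m+2) =>
          (i:ℕ) < 4*m+1 ∧ 2*m+1 ≤ (i:ℕ)).card : ZMod 2) := by
        rw [Finset.sum_boole]
    _ = 0 := by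
        rw [cardUV]; push_cast
        rw [show ((2 : ZMod 2)) = 0 by decide]; ring

lemma genU_genV_indep (m : ℕ) : LinearIndependent (ZMod 2) ![genU m, genV m] := by
  rw [LinearIndependent.pair_iff]
  intro s t hst
  have h0 := congrFun hst ⟨0, by omega⟩
  have h1 := congrFun hst ⟨6*m+1, by omega⟩
  simp only [Pi.add_apply, Pi.smul_apply, Pi.zero_apply, smul_eq_mul] at h0 h1
  unfold genU genV at h0 h1
  simp only [show (((⟨0, by omega⟩ : Fin (6*m+2)) : ℕ)) = 0 from rfl,
    show (((⟨6*m+1, by omega⟩ : Fin (6*m+2)) : ℕ)) = 6*m+1 from rfl] at h0 h1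
  rw [if_pos (by omega), if_neg (by omega)] at h0
  rw [if_neg (by omega), if_pos (by omega)] at h1
  constructor
  · simpa using h0
  · simpa using h1

/-- Plotkin-type bound: any 2-dimensional binary code of length n has a nonzero word of
weight ≤ 2n/3, in fact the three norms sum to at most 2n. -/
lemma dim2_upper {n : ℕ} (C : Submodule (ZMod 2) (Fin n → ZMod 2))
    (hrk : Module.finrank (ZMod 2) ↥C = 2) {d : ℕ} (hd : hasMinDist C d) :
    3 * d ≤ 2 * n := by
  obtain ⟨hlow, -⟩ := hd
  let B := Module.finBasisOfFinrankEq (ZMod 2) ↥C hrk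
  set a : Fin n → ZMod 2 := ↑(B 0) with ha
  set b : Fin n → ZMod 2 := ↑(B 1) with hb
  have haC : a ∈ C := (B 0).2
  have hbC : b ∈ C := (B 1).2
  have ha0 : a ≠ 0 := by
    simpa [ha, Submodule.coe_eq_zero] using B.ne_zero 0
  have hb0 : b ≠ 0 := by
    simpa [hb, Submodule.coe_eq_zero] using B.ne_zero 1
  have hab0 : a + b ≠ 0 := by
    intro h
    have hab' : a = b := by
      funext i
      have hi := congrFun h i
      simp only [Pi.add_apply, Pi.zero_apply] at hi
      rcases zmod2_cases (a i) with h' | h' <;> rcases zmod2_cases (b i) with h'' | h'' <;>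
        simp_all
    exact absurd (B.injective (Subtype.ext hab')) (by decide)
  have h1 := hlow a haC ha0
  have h2 := hlow b hbC hb0
  have h3 := hlow (a + b) (C.add_mem haC hbC) hab0
  have hsum : hammingNorm a + hammingNorm b + hammingNorm (a + b) ≤ 2 * n := by
    have key : ∀ x : Fin n → ZMod 2, hammingNorm x
        = ∑ i : Fin n, (if x i ≠ 0 then 1 else 0) := by
      intro x
      rw [show hammingNorm x = (Finset.univ.filter fun i => x i ≠ 0).card from rfl,
        Finset.card_filter]
    rw [key, key, key, ← Finset.sum_add_distrib, ← Finset.sum_add_distrib]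
    calc (∑ i : Fin n, ((if a i ≠ 0 then 1 else 0) + (if b i ≠ 0 then 1 else 0)
            + (if (a + b) i ≠ 0 then 1 else 0)))
        ≤ ∑ _i : Fin n, 2 := by
          apply Finset.sum_le_sum
          intro i _
          rcases zmod2_cases (a i) with h' | h' <;> rcases zmod2_cases (b i) with h'' | h'' <;>
            simp [Pi.add_apply, h', h'', show ((1:ZMod 2) + 1) = 0 from rfl]
      _ = 2 * n := by simp [Finset.sum_const, mul_comm]
  omega

/-- For every nonnegative integer `m` there is a binary `[6m+2, 2, 4m+1]` LCD code;
hence `LCD[6m+2, 2] = ⌊2(6m+2)/3⌋`. -/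
theorem lcd_6m_add_two (m : ℕ) :
    (∃ C : Submodule (ZMod 2) (Fin (6 * m + 2) → ZMod 2),
      Module.finrank (ZMod 2) ↥C = 2 ∧ hasMinDist C (4 * m + 1) ∧ isLCD C) ∧
    LCDmax (6 * m + 2) 2 = 2 * (6 * m + 2) / 3 := by
  classical
  set C : Submodule (ZMod 2) (Fin (6 * m + 2) → ZMod 2) :=
    Submodule.span (ZMod 2) {genU m, genV m} with hC
  have huC : genU m ∈ C := Submodule.subset_span (by simp)
  have hvC : genV m ∈ C := Submodule.subset_span (by simp)
  have hrange : Set.range ![genU m, genV m] = {genU m, genV m} := by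
    rw [Matrix.range_cons, Matrix.range_cons_empty, Set.singleton_union]
  have hrk : Module.finrank (ZMod 2) ↥C = 2 := by
    rw [hC, ← hrange, finrank_span_eq_card (genU_genV_indep m)]
    simp
  have hmd : hasMinDist C (4 * m + 1) := by
    constructor
    · intro x hx hx0
      obtain ⟨a, b, hab⟩ := Submodule.mem_span_pair.1 hx
      rcases zmod2_cases a with ha | ha <;> rcases zmod2_cases b with hb | hb <;>
        subst ha hb
      · exfalso; apply hx0; rw [← hab]; simp
      · rw [← hab]; simp only [zero_smul, one_smul, zero_add]; rw [normV]
      · rw [← hab]; simp only [zero_smul, one_smul, add_zero]; rw [normU]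
      · rw [← hab]
        simp only [one_smul]
        rw [normUV]
        omega
    · refine ⟨genU m, huC, ?_, normU m⟩
      intro h
      have hn := normU m
      rw [h, hammingNorm_zero] at hn
      omega
  have hlcd : isLCD C := by
    rw [isLCD, eq_bot_iff]
    rintro x ⟨hxC, hxD⟩
    obtain ⟨a, b, hab⟩ := Submodule.mem_span_pair.1 hxC
    have hdu : x ⬝ᵥ genU m = 0 := hxD (genU m) huC
    have hdv : x ⬝ᵥ genV m = 0 := hxD (genV m) hvC
    rw [← hab] at hdu hdv
    simp only [add_dotProduct, smul_dotProduct, smul_eq_mul] at hdu hdv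
    rw [dotUU, show genV m ⬝ᵥ genU m = 0 from
      (dotProduct_comm (genU m) (genV m)) ▸ dotUV m] at hdu
    rw [dotVV, dotUV] at hdv
    simp only [mul_one, mul_zero, add_zero, zero_add] at hdu hdv
    have : x = 0 := by rw [← hab, hdu, hdv]; simp
    simp [this]
  have hEx : ∃ C : Submodule (ZMod 2) (Fin (6 * m + 2) → ZMod 2),
      Module.finrank (ZMod 2) ↥C = 2 ∧ hasMinDist C (4 * m + 1) ∧ isLCD C :=
    ⟨C, hrk, hmd, hlcd⟩
  refine ⟨hEx, ?_⟩
  have hub : ∀ d ∈ {d | ∃ C : Submodule (ZMod 2) (Fin (6*m+2) → ZMod 2),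
      Module.finrank (ZMod 2) ↥C = 2 ∧ hasMinDist C d ∧ isLCD C}, d ≤ 4 * m + 1 := by
    rintro d ⟨D, hDrk, hDmd, -⟩
    have := dim2_upper D hDrk hDmd
    omega
  have hmem : 4 * m + 1 ∈ {d | ∃ C : Submodule (ZMod 2) (Fin (6*m+2) → ZMod 2),
      Module.finrank (ZMod 2) ↥C = 2 ∧ hasMinDist C d ∧ isLCD C} := hEx
  have : LCDmax (6 * m + 2) 2 = 4 * m + 1 := by
    rw [LCDmax]
    apply le_antisymm
    · exact csSup_le ⟨4 * m + 1, hmem⟩ hub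
    · exact le_csSup ⟨4 * m + 1, hub⟩ hmem
  rw [this]
  omega
end

section
/- For every positive integer m, there exists a binary [6m−2, 2, 4m−2] LCD code; hence LCD[6m−2,2] = ⌊2(6m−2)/3⌋. -/
open Matrix

/-! ### Auxiliary counting lemmas -/

lemma card_fin_filter {n : ℕ} (q : ℕ → Prop) [DecidablePred q] :
    ((Finset.univ : Finset (Fin n)).filter (fun i => q i.val)).card
      = ((Finset.range n).filter q).card := by
  rw [← Finset.card_image_of_injective _ Fin.val_injective]
  congr 1
  ext j
  simp only [Finset.mem_image, Finset.mem_filter, Finset.mem_univ, true_and,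
    Finset.mem_range]
  constructor
  · rintro ⟨i, hq, rfl⟩; exact ⟨i.isLt, hq⟩
  · rintro ⟨hj, hq⟩; exact ⟨⟨j, hj⟩, hq, rfl⟩

lemma norm_eq {n : ℕ} (v : Fin n → ZMod 2) (q : ℕ → Prop) [DecidablePred q]
    (h : ∀ i : Fin n, v i ≠ 0 ↔ q i.val) :
    hammingNorm v = ((Finset.range n).filter q).card := by
  simp only [hammingNorm]
  rw [show (Finset.univ.filter (fun i : Fin n => v i ≠ 0))
      = Finset.univ.filter (fun i : Fin n => q i.val) from
    Finset.filter_congr (fun i _ => by simp only [h i]), card_fin_filter]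

lemma dot_eq {n : ℕ} (v w : Fin n → ZMod 2) (q : ℕ → Prop) [DecidablePred q]
    (h : ∀ i : Fin n, v i * w i = if q i.val then 1 else 0) :
    v ⬝ᵥ w = (((Finset.range n).filter q).card : ZMod 2) := by
  rw [dotProduct]
  simp only [h]
  rw [Finset.sum_boole, card_fin_filter]

/-! ### The upper bound: any binary code of dimension 2 has `3d ≤ 2n` -/

lemma weight_bound {n d : ℕ} (C : Submodule (ZMod 2) (Fin n → ZMod 2))
    (h2 : Module.finrank (ZMod 2) ↥C = 2) (hd : hasMinDist C d) : 3 * d ≤ 2 * n := by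
  let bs := Module.finBasisOfFinrankEq (ZMod 2) ↥C h2
  set u : Fin n → ZMod 2 := ↑(bs 0) with hu
  set v : Fin n → ZMod 2 := ↑(bs 1) with hv
  have huC : u ∈ C := (bs 0).2
  have hvC : v ∈ C := (bs 1).2
  have hune : u ≠ 0 := by
    intro h
    exact bs.ne_zero 0 (by exact_mod_cast Subtype.ext h)
  have hvne : v ≠ 0 := by
    intro h
    exact bs.ne_zero 1 (by exact_mod_cast Subtype.ext h)
  have huvne : u + v ≠ 0 := by
    intro h
    have hsum : bs 0 + bs 1 = 0 := by
      apply Subtype.ext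
      push_cast
      exact h
    have h01 : bs 0 = bs 1 := by
      have hyy : bs 1 + bs 1 = 0 := by
        have := two_smul (ZMod 2) (bs 1)
        rw [show (2 : ZMod 2) = 0 by decide, zero_smul] at this
        exact this.symm
      have := congrArg (· + bs 1) hsum
      simpa [add_assoc, hyy] using this
    have := bs.injective h01
    simp at this
  have key : ∀ x y : ZMod 2,
      ((if x ≠ 0 then 1 else 0) + (if y ≠ 0 then 1 else 0)
        + (if x + y ≠ 0 then 1 else 0) : ℕ) ≤ 2 := by decide
  have hsum : hammingNorm u + hammingNorm v + hammingNorm (u + v) ≤ 2 * n := by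
    simp only [hammingNorm]
    rw [Finset.card_filter, Finset.card_filter, Finset.card_filter,
      ← Finset.sum_add_distrib, ← Finset.sum_add_distrib]
    calc ∑ i : Fin n, ((if u i ≠ 0 then 1 else 0) + (if v i ≠ 0 then 1 else 0)
          + (if (u + v) i ≠ 0 then 1 else 0))
        ≤ ∑ _i : Fin n, 2 := Finset.sum_le_sum (fun i _ => by
          simpa using key (u i) (v i))
      _ = 2 * n := by simp [Finset.sum_const, mul_comm]
  have h1 := hd.1 u huC hune
  have h2' := hd.1 v hvC hvne
  have h3 := hd.1 (u + v) (C.add_mem huC hvC) huvne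
  omega

/-! ### The witness code -/

section Constr
variable (m : ℕ)

def aa : Fin (6 * m - 2) → ZMod 2 := fun i => if (i : ℕ) < 4 * m - 1 then 1 else 0
def bb : Fin (6 * m - 2) → ZMod 2 := fun i => if 2 * m - 1 ≤ (i : ℕ) then 1 else 0

variable {m} (hm : 1 ≤ m)
include hm

lemma wa : hammingNorm (aa m) = 4 * m - 1 := by
  rw [norm_eq (aa m) (fun j => j < 4 * m - 1)
    (fun i => by by_cases h : (i : ℕ) < 4 * m - 1 <;> simp [aa, h])]
  have : (Finset.range (6 * m - 2)).filter (fun j => j < 4 * m - 1)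
      = Finset.range (4 * m - 1) := by
    ext j; simp only [Finset.mem_filter, Finset.mem_range]; omega
  rw [this, Finset.card_range]

lemma wb : hammingNorm (bb m) = 4 * m - 1 := by
  rw [norm_eq (bb m) (fun j => 2 * m - 1 ≤ j)
    (fun i => by by_cases h : 2 * m - 1 ≤ (i : ℕ) <;> simp [bb, h])]
  have : (Finset.range (6 * m - 2)).filter (fun j => 2 * m - 1 ≤ j)
      = Finset.Ico (2 * m - 1) (6 * m - 2) := by
    ext j; simp only [Finset.mem_filter, Finset.mem_range, Finset.mem_Ico]; omega
  rw [this, Nat.card_Ico]; omega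

lemma wab : hammingNorm (aa m + bb m) = 4 * m - 2 := by
  rw [norm_eq (aa m + bb m) (fun j => j < 2 * m - 1 ∨ 4 * m - 1 ≤ j)
    (fun i => by
      by_cases h1 : (i : ℕ) < 4 * m - 1 <;> by_cases h2 : 2 * m - 1 ≤ (i : ℕ) <;>
        simp [aa, bb, h1, h2, show (1:ZMod 2)+1 = 0 from by decide] <;> omega)]
  have : (Finset.range (6 * m - 2)).filter (fun j => j < 2 * m - 1 ∨ 4 * m - 1 ≤ j)
      = Finset.range (2 * m - 1) ∪ Finset.Ico (4 * m - 1) (6 * m - 2) := by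
    ext j
    simp only [Finset.mem_filter, Finset.mem_range, Finset.mem_union, Finset.mem_Ico]
    omega
  rw [this, Finset.card_union_of_disjoint, Finset.card_range, Nat.card_Ico]
  · omega
  · rw [Finset.disjoint_left]
    intro j hj hj'
    simp only [Finset.mem_range, Finset.mem_Ico] at hj hj'
    omega

lemma daa : aa m ⬝ᵥ aa m = 1 := by
  rw [dot_eq (aa m) (aa m) (fun j => j < 4 * m - 1)
    (fun i => by by_cases h : (i : ℕ) < 4 * m - 1 <;> simp [aa, h])]
  have : (Finset.range (6 * m - 2)).filter (fun j => j < 4 * m - 1)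
      = Finset.range (4 * m - 1) := by
    ext j; simp only [Finset.mem_filter, Finset.mem_range]; omega
  rw [this, Finset.card_range, show 4 * m - 1 = 2 * (2 * m - 1) + 1 by omega]
  push_cast
  rw [show (2 : ZMod 2) = 0 by decide]
  ring

lemma dbb : bb m ⬝ᵥ bb m = 1 := by
  rw [dot_eq (bb m) (bb m) (fun j => 2 * m - 1 ≤ j)
    (fun i => by by_cases h : 2 * m - 1 ≤ (i : ℕ) <;> simp [bb, h])]
  have : (Finset.range (6 * m - 2)).filter (fun j => 2 * m - 1 ≤ j)
      = Finset.Ico (2 * m - 1) (6 * m - 2) := by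
    ext j; simp only [Finset.mem_filter, Finset.mem_range, Finset.mem_Ico]; omega
  rw [this, Nat.card_Ico, show 6 * m - 2 - (2 * m - 1) = 2 * (2 * m - 1) + 1 by omega]
  push_cast
  rw [show (2 : ZMod 2) = 0 by decide]
  ring

lemma dab : aa m ⬝ᵥ bb m = 0 := by
  rw [dot_eq (aa m) (bb m) (fun j => j < 4 * m - 1 ∧ 2 * m - 1 ≤ j)
    (fun i => by
      by_cases h1 : (i : ℕ) < 4 * m - 1 <;> by_cases h2 : 2 * m - 1 ≤ (i : ℕ) <;>
        simp [aa, bb, h1, h2])]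
  have : (Finset.range (6 * m - 2)).filter (fun j => j < 4 * m - 1 ∧ 2 * m - 1 ≤ j)
      = Finset.Ico (2 * m - 1) (4 * m - 1) := by
    ext j; simp only [Finset.mem_filter, Finset.mem_range, Finset.mem_Ico]; omega
  rw [this, Nat.card_Ico, show 4 * m - 1 - (2 * m - 1) = 2 * m by omega]
  push_cast
  rw [show (2 : ZMod 2) = 0 by decide]
  ring

lemma dba : bb m ⬝ᵥ aa m = 0 := by
  rw [dotProduct_comm]; exact dab hm

lemma exists_lcd_code :
    ∃ C : Submodule (ZMod 2) (Fin (6 * m - 2) → ZMod 2),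
      Module.finrank (ZMod 2) ↥C = 2 ∧ hasMinDist C (4 * m - 2) ∧ isLCD C := by
  have zmodcases : ∀ z : ZMod 2, z = 0 ∨ z = 1 := by decide
  refine ⟨Submodule.span (ZMod 2) {aa m, bb m}, ?_, ⟨?_, ?_⟩, ?_⟩
  · -- finrank = 2
    have hli : LinearIndependent (ZMod 2) ![aa m, bb m] := by
      rw [LinearIndependent.pair_iff]
      intro s t hst
      have h0 := congrFun hst ⟨0, by omega⟩
      have h1 := congrFun hst ⟨6 * m - 3, by omega⟩
      have c1 : (0 : ℕ) < 4 * m - 1 := by omega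
      have c2 : ¬ (2 * m - 1 ≤ (0 : ℕ)) := by omega
      have c3 : ¬ ((6 * m - 3 : ℕ) < 4 * m - 1) := by omega
      have c4 : (2 * m - 1 : ℕ) ≤ 6 * m - 3 := by omega
      simp only [Pi.add_apply, Pi.smul_apply, smul_eq_mul, aa, bb, Pi.zero_apply] at h0 h1
      rw [if_pos c1, if_neg c2] at h0
      rw [if_neg c3, if_pos c4] at h1
      simp at h0 h1
      exact ⟨h0, h1⟩
    have hr : Set.range ![aa m, bb m] = {aa m, bb m} := by
      simp [Matrix.range_cons, Matrix.range_empty, Set.pair_comm]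
    rw [← hr, finrank_span_eq_card hli, Fintype.card_fin]
  · -- min distance lower bound
    intro v hv hvne
    rw [Submodule.mem_span_pair] at hv
    obtain ⟨x, y, rfl⟩ := hv
    rcases zmodcases x with hx | hx <;> rcases zmodcases y with hy | hy <;>
      subst hx <;> subst hy <;>
      simp only [zero_smul, one_smul, add_zero, zero_add] at hvne ⊢
    · exact absurd rfl hvne
    · rw [wb hm]; omega
    · rw [wa hm]; omega
    · rw [wab hm]
  · -- witness codeword
    refine ⟨aa m + bb m, Submodule.add_mem _
      (Submodule.subset_span (by simp)) (Submodule.subset_span (by simp)), ?_, wab hm⟩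
    intro h
    have := wab hm
    rw [h] at this
    simp [hammingNorm] at this
    omega
  · -- LCD
    rw [isLCD, eq_bot_iff]
    rintro v hv
    rw [Submodule.mem_inf] at hv
    obtain ⟨hvC, hvD⟩ := hv
    have haC : aa m ∈ Submodule.span (ZMod 2) {aa m, bb m} :=
      Submodule.subset_span (by simp)
    have hbC : bb m ∈ Submodule.span (ZMod 2) {aa m, bb m} :=
      Submodule.subset_span (by simp)
    have hA : v ⬝ᵥ aa m = 0 := hvD (aa m) haC
    have hB : v ⬝ᵥ bb m = 0 := hvD (bb m) hbC
    rw [Submodule.mem_span_pair] at hvC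
    obtain ⟨x, y, rfl⟩ := hvC
    simp only [add_dotProduct, smul_dotProduct, daa hm, dab hm,
      dba hm, dbb hm, smul_eq_mul, mul_one, mul_zero, add_zero, zero_add] at hA hB
    rw [Submodule.mem_bot, hA, hB, zero_smul, zero_smul, add_zero]

end Constr

/-- For every positive integer `m` there is a binary `[6m−2, 2, 4m−2]` LCD code;
hence `LCD[6m−2, 2] = ⌊2(6m−2)/3⌋`. -/
theorem lcd_6m_sub_two (m : ℕ) (hm : 1 ≤ m) :
    (∃ C : Submodule (ZMod 2) (Fin (6 * m - 2) → ZMod 2),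
      Module.finrank (ZMod 2) ↥C = 2 ∧ hasMinDist C (4 * m - 2) ∧ isLCD C) ∧
    LCDmax (6 * m - 2) 2 = 2 * (6 * m - 2) / 3 := by
  have hex := exists_lcd_code hm
  refine ⟨hex, ?_⟩
  have hub : ∀ d ∈ {d | ∃ C : Submodule (ZMod 2) (Fin (6 * m - 2) → ZMod 2),
      Module.finrank (ZMod 2) ↥C = 2 ∧ hasMinDist C d ∧ isLCD C}, d ≤ 4 * m - 2 := by
    rintro d ⟨C, hC1, hC2, -⟩
    have := weight_bound C hC1 hC2
    omega
  rw [show 2 * (6 * m - 2) / 3 = 4 * m - 2 by omega, LCDmax]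
  exact le_antisymm (csSup_le ⟨_, hex⟩ hub) (le_csSup ⟨4 * m - 2, hub⟩ hex)
end

section
/- For every positive odd integer i, there exists a binary [3i, 2, 2i] LCD code; hence LCD[3i,2] = ⌊2(3i)/3⌋ for i odd. -/
open Matrix

/-! ### Auxiliary lemmas -/

lemma cardIco' (n a b : ℕ) :
    ((Finset.range n).filter fun j => a ≤ j ∧ j < b).card = min b n - a := by
  rw [show ((Finset.range n).filter fun j => a ≤ j ∧ j < b) = Finset.Ico a (min b n) by
    ext j; simp [Finset.mem_Ico]; omega]
  simp

lemma hammingNorm_ite {n : ℕ} (P : ℕ → Prop) [DecidablePred P] :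
    hammingNorm (fun j : Fin n => if P (j : ℕ) then (1 : ZMod 2) else 0) =
      ((Finset.range n).filter P).card := by
  show (Finset.univ.filter fun j : Fin n => (if P (j:ℕ) then (1:ZMod 2) else 0) ≠ 0).card = _
  rw [Finset.card_filter, Finset.card_filter]
  rw [Fin.sum_univ_eq_sum_range (fun j => if (if P j then (1:ZMod 2) else 0) ≠ 0 then 1 else 0)]
  apply Finset.sum_congr rfl
  intro j _
  by_cases h : P j <;> simp [h]

lemma dot_ite {n : ℕ} (P Q : ℕ → Prop) [DecidablePred P] [DecidablePred Q] :
    (fun j : Fin n => if P (j : ℕ) then (1 : ZMod 2) else 0) ⬝ᵥ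
      (fun j : Fin n => if Q (j : ℕ) then (1 : ZMod 2) else 0) =
      (((Finset.range n).filter fun j => P j ∧ Q j).card : ZMod 2) := by
  show ∑ j : Fin n, _ = _
  rw [Fin.sum_univ_eq_sum_range (fun j => (if P j then (1:ZMod 2) else 0) * (if Q j then 1 else 0))]
  rw [Finset.card_filter, Nat.cast_sum]
  apply Finset.sum_congr rfl
  intro j _
  by_cases h1 : P j <;> by_cases h2 : Q j <;> simp [h1, h2]

lemma zmod2_ind (a b : ZMod 2) :
    ((if a ≠ 0 then 1 else 0) + (if b ≠ 0 then 1 else 0) + (if a + b ≠ 0 then 1 else 0) : ℕ) ≤ 2 := by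
  revert a; revert b; decide

lemma bound_dim2 {n d : ℕ} (C : Submodule (ZMod 2) (Fin n → ZMod 2))
    (hr : Module.finrank (ZMod 2) ↥C = 2) (hd : hasMinDist C d) : 3 * d ≤ 2 * n := by
  have b : Module.Basis (Fin 2) (ZMod 2) ↥C := Module.finBasisOfFinrankEq (ZMod 2) ↥C hr
  set u : Fin n → ZMod 2 := (b 0 : Fin n → ZMod 2) with hu
  set w : Fin n → ZMod 2 := (b 1 : Fin n → ZMod 2) with hw
  have huC : u ∈ C := (b 0).2
  have hwC : w ∈ C := (b 1).2
  have h1 : u ≠ 0 := by simpa [hu] using b.ne_zero 0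
  have h2 : w ≠ 0 := by simpa [hw] using b.ne_zero 1
  have hne : u ≠ w := by
    intro h
    exact (b.injective.ne (by decide : (0 : Fin 2) ≠ 1)) (Subtype.coe_injective h)
  have h3 : u + w ≠ 0 := by
    intro h
    apply hne
    funext j
    have := congrFun h j
    simp only [Pi.add_apply, Pi.zero_apply] at this
    revert this
    generalize u j = a; generalize w j = c
    revert a; revert c; decide
  have d1 := hd.1 u huC h1
  have d2 := hd.1 w hwC h2
  have d3 := hd.1 (u + w) (C.add_mem huC hwC) h3
  have key : hammingNorm u + hammingNorm w + hammingNorm (u + w) ≤ 2 * n := by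
    show (Finset.univ.filter fun j : Fin n => u j ≠ 0).card
      + (Finset.univ.filter fun j : Fin n => w j ≠ 0).card
      + (Finset.univ.filter fun j : Fin n => (u + w) j ≠ 0).card ≤ 2 * n
    rw [Finset.card_filter, Finset.card_filter, Finset.card_filter,
      ← Finset.sum_add_distrib, ← Finset.sum_add_distrib]
    calc (∑ j : Fin n, (((if u j ≠ 0 then 1 else 0) + if w j ≠ 0 then 1 else 0)
            + if (u + w) j ≠ 0 then 1 else 0))
        ≤ ∑ _j : Fin n, 2 := by
          apply Finset.sum_le_sum
          intro j _
          simpa using zmod2_ind (u j) (w j)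
      _ = 2 * n := by simp [mul_comm]
  omega

lemma lcd_construction (i : ℕ) (hi : 1 ≤ i) (hodd : Odd i) :
    ∃ C : Submodule (ZMod 2) (Fin (3 * i) → ZMod 2),
      Module.finrank (ZMod 2) ↥C = 2 ∧ hasMinDist C (2 * i) ∧ isLCD C := by
  set x : Fin (3*i) → ZMod 2 := fun j => if (j:ℕ) < 2*i then 1 else 0 with hxdef
  set y : Fin (3*i) → ZMod 2 := fun j => if i ≤ (j:ℕ) then 1 else 0 with hydef
  set C := Submodule.span (ZMod 2) ({x, y} : Set (Fin (3*i) → ZMod 2)) with hCdef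
  have hxC : x ∈ C := Submodule.subset_span (by simp)
  have hyC : y ∈ C := Submodule.subset_span (by simp)
  have hxy : x + y = fun j : Fin (3*i) => if ((j:ℕ) < i ∨ 2*i ≤ (j:ℕ)) then (1:ZMod 2) else 0 := by
    funext j
    simp only [Pi.add_apply, hxdef, hydef]
    by_cases h1 : (j:ℕ) < i
    · rw [if_pos (by omega), if_neg (by omega), if_pos (by omega)]; ring
    · by_cases h2 : (j:ℕ) < 2*i
      · rw [if_pos (by omega), if_pos (by omega), if_neg (by omega)]; decide
      · rw [if_neg (by omega), if_pos (by omega), if_pos (by omega)]; ring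
  -- weights
  have wtx : hammingNorm x = 2*i := by
    rw [hxdef, hammingNorm_ite (fun j => j < 2*i)]
    rw [show ((Finset.range (3*i)).filter fun j => j < 2*i) = Finset.range (2*i) from by
      ext j; simp; omega]
    simp
  have wty : hammingNorm y = 2*i := by
    rw [hydef, hammingNorm_ite (fun j => i ≤ j)]
    rw [show ((Finset.range (3*i)).filter fun j => i ≤ j) = Finset.Ico i (3*i) from by
      ext j; simp [Finset.mem_Ico]; omega]
    rw [Nat.card_Ico]; omega
  have wtxy : hammingNorm (x + y) = 2*i := by
    rw [hxy, hammingNorm_ite (fun j => j < i ∨ 2*i ≤ j)]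
    rw [show ((Finset.range (3*i)).filter fun j => j < i ∨ 2*i ≤ j)
        = Finset.range i ∪ Finset.Ico (2*i) (3*i) from by
      ext j; simp [Finset.mem_Ico]; omega]
    rw [Finset.card_union_of_disjoint (by
      simp [Finset.disjoint_left, Finset.mem_Ico]; omega)]
    rw [Finset.card_range, Nat.card_Ico]; omega
  -- dot products
  have dxx : x ⬝ᵥ x = 0 := by
    rw [hxdef, dot_ite (fun j => j < 2*i) (fun j => j < 2*i)]
    rw [show ((Finset.range (3*i)).filter fun j => j < 2*i ∧ j < 2*i) = Finset.range (2*i) from by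
      ext j; simp; omega]
    rw [Finset.card_range]
    push_cast
    rw [show (2 : ZMod 2) = 0 from rfl]
    ring
  have dyy : y ⬝ᵥ y = 0 := by
    rw [hydef, dot_ite (fun j => i ≤ j) (fun j => i ≤ j)]
    rw [show ((Finset.range (3*i)).filter fun j => i ≤ j ∧ i ≤ j) = Finset.Ico i (3*i) from by
      ext j; simp [Finset.mem_Ico]; omega]
    rw [Nat.card_Ico]
    obtain ⟨k, hk⟩ := hodd
    rw [show 3*i - i = 2*(2*k+1) from by omega]
    push_cast
    rw [show (2 : ZMod 2) = 0 from rfl]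
    ring
  have dxy : x ⬝ᵥ y = 1 := by
    rw [hxdef, hydef, dot_ite (fun j => j < 2*i) (fun j => i ≤ j)]
    rw [show ((Finset.range (3*i)).filter fun j => j < 2*i ∧ i ≤ j) = Finset.Ico i (2*i) from by
      ext j; simp [Finset.mem_Ico]; omega]
    rw [Nat.card_Ico]
    obtain ⟨k, hk⟩ := hodd
    rw [show 2*i - i = 2*k+1 from by omega]
    push_cast
    rw [show (2 : ZMod 2) = 0 from rfl]
    ring
  -- membership classification
  have mem_cases : ∀ v ∈ C, v = 0 ∨ v = x ∨ v = y ∨ v = x + y := by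
    intro v hv
    rw [hCdef, Submodule.mem_span_pair] at hv
    obtain ⟨a, b, rfl⟩ := hv
    have hall : ∀ c : ZMod 2, c = 0 ∨ c = 1 := by decide
    rcases hall a with rfl | rfl <;> rcases hall b with rfl | rfl <;> simp <;> tauto
  have hxne : x ≠ 0 := by
    intro h
    have := congrFun h ⟨0, by omega⟩
    rw [hxdef] at this
    simp only [Pi.zero_apply] at this
    rw [if_pos (by omega)] at this
    exact one_ne_zero this
  -- linear independence
  have li : LinearIndependent (ZMod 2) ![x, y] := by
    rw [LinearIndependent.pair_iff]
    intro s t h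
    have h0 := congrFun h ⟨0, by omega⟩
    have h2 := congrFun h ⟨2*i, by omega⟩
    simp only [hxdef, hydef, Pi.add_apply, Pi.smul_apply, smul_eq_mul, Pi.zero_apply] at h0 h2
    rw [if_pos (by omega), if_neg (by omega)] at h0
    rw [if_neg (by omega), if_pos (by omega)] at h2
    simp at h0 h2
    exact ⟨h0, h2⟩
  refine ⟨C, ?_, ⟨?_, x, hxC, hxne, wtx⟩, ?_⟩
  · rw [hCdef, show ({x, y} : Set (Fin (3*i) → ZMod 2)) = Set.range ![x, y] from by
      ext v; simp [Set.range, Fin.exists_fin_two]; tauto]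
    rw [finrank_span_eq_card li]
    simp
  · intro v hv hvne
    rcases mem_cases v hv with rfl | rfl | rfl | rfl
    · exact absurd rfl hvne
    · omega
    · omega
    · omega
  · rw [isLCD, eq_bot_iff]
    rintro v ⟨hvC, hvD⟩
    have hD : ∀ c ∈ C, v ⬝ᵥ c = 0 := hvD
    simp only [Submodule.mem_bot]
    rcases mem_cases v hvC with rfl | rfl | rfl | rfl
    · rfl
    · exact absurd (hD y hyC) (by rw [dxy]; exact one_ne_zero)
    · refine absurd (hD x hxC) ?_
      rw [dotProduct_comm, dxy]
      exact one_ne_zero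
    · refine absurd (hD x hxC) ?_
      rw [add_dotProduct, dxx, dotProduct_comm, dxy]
      simp

/-- For every positive odd integer `i` there is a binary `[3i, 2, 2i]` LCD code;
hence `LCD[3i, 2] = ⌊2(3i)/3⌋` for odd `i`. -/
theorem lcd_3i_odd (i : ℕ) (hi : 1 ≤ i) (hodd : Odd i) :
    (∃ C : Submodule (ZMod 2) (Fin (3 * i) → ZMod 2),
      Module.finrank (ZMod 2) ↥C = 2 ∧ hasMinDist C (2 * i) ∧ isLCD C) ∧
    LCDmax (3 * i) 2 = 2 * (3 * i) / 3 := by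
  have hex := lcd_construction i hi hodd
  refine ⟨hex, ?_⟩
  rw [LCDmax, show 2 * (3 * i) / 3 = 2 * i from by omega]
  have hub : ∀ d ∈ {d | ∃ C : Submodule (ZMod 2) (Fin (3*i) → ZMod 2),
      Module.finrank (ZMod 2) ↥C = 2 ∧ hasMinDist C d ∧ isLCD C}, d ≤ 2 * i := by
    rintro d ⟨C, hr, hd, -⟩
    have := bound_dim2 C hr hd
    omega
  exact le_antisymm (csSup_le ⟨2*i, hex⟩ hub) (le_csSup ⟨2*i, fun d hd => hub d hd⟩ hex)
end

section
/- For any integers i ≥ 2 and n ≥ 2^i, there exists a binary [n, n−i, 2] LCD code; consequently LCD[n, n−i] = 2 for all n ≥ 2^i. -/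
open Matrix

section Aux

/-- raw encoder on ℕ indices -/
def encf (k t : ℕ) (x : Fin k → ZMod 2) (j : ℕ) : ZMod 2 :=
  if h : j < k then x ⟨j, h⟩ else if j < k + t then ∑ m, x m else 0

def enc (n k t : ℕ) : (Fin k → ZMod 2) →ₗ[ZMod 2] (Fin n → ZMod 2) where
  toFun x := fun j => encf k t x (j : ℕ)
  map_add' x y := by
    funext j
    simp only [encf, Pi.add_apply]
    split
    · rfl
    · split
      · rw [Finset.sum_add_distrib]
      · simp
  map_smul' c x := by
    funext j
    simp only [encf, Pi.smul_apply, RingHom.id_apply, smul_eq_mul]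
    split
    · rfl
    · split
      · rw [Finset.mul_sum]
      · simp

@[simp] lemma enc_apply (n k t : ℕ) (x : Fin k → ZMod 2) (j : Fin n) :
    enc n k t x j = encf k t x (j : ℕ) := rfl

lemma enc_dot {n k t : ℕ} (hkt : k + t ≤ n) (ht : Even t) (x y : Fin k → ZMod 2) :
    enc n k t x ⬝ᵥ enc n k t y = x ⬝ᵥ y := by
  have hk : k ≤ k + t := Nat.le_add_right k t
  show ∑ j : Fin n, enc n k t x j * enc n k t y j = ∑ m : Fin k, x m * y m
  simp only [enc_apply]
  rw [Fin.sum_univ_eq_sum_range (fun j => encf k t x j * encf k t y j) n,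
      Finset.range_eq_Ico, ← Finset.sum_Ico_consecutive _ (Nat.zero_le (k+t)) hkt,
      ← Finset.sum_Ico_consecutive _ (Nat.zero_le k) hk]
  have h3 : ∑ j ∈ Finset.Ico (k+t) n, encf k t x j * encf k t y j = 0 := by
    apply Finset.sum_eq_zero
    intro j hj
    rw [Finset.mem_Ico] at hj
    have h1 : ¬ j < k := by omega
    have h2 : ¬ j < k + t := by omega
    simp [encf, h1, h2]
  have h2 : ∑ j ∈ Finset.Ico k (k+t), encf k t x j * encf k t y j = 0 := by
    have hcongr : ∀ j ∈ Finset.Ico k (k+t),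
        encf k t x j * encf k t y j = (∑ m, x m) * ∑ m, y m := by
      intro j hj; rw [Finset.mem_Ico] at hj
      have h1 : ¬ j < k := by omega
      simp [encf, h1, hj.2]
    rw [Finset.sum_congr rfl hcongr, Finset.sum_const, Nat.card_Ico]
    obtain ⟨s, hs⟩ := ht
    have hcast : ((k + t - k : ℕ) : ZMod 2) = 0 :=
      (CharP.cast_eq_zero_iff (ZMod 2) 2 _).mpr ⟨s, by omega⟩
    rw [nsmul_eq_mul, hcast, zero_mul]
  have h4 : ∑ j ∈ Finset.Ico 0 k, encf k t x j * encf k t y j = ∑ m : Fin k, x m * y m := by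
    rw [← Finset.range_eq_Ico,
      ← Fin.sum_univ_eq_sum_range (fun j => encf k t x j * encf k t y j) k]
    apply Finset.sum_congr rfl
    intro m _
    simp [encf, m.isLt]
  rw [h2, h3, h4, add_zero, add_zero]

lemma enc_inj {n k t : ℕ} (hkn : k ≤ n) : Function.Injective (enc n k t) := by
  intro x y hxy
  funext m
  have hm : (m : ℕ) < n := lt_of_lt_of_le m.isLt hkn
  have h := congrFun hxy ⟨m, hm⟩
  simpa [enc, encf, m.isLt] using h

lemma two_le_hammingNorm {n : ℕ} (v : Fin n → ZMod 2) (a b : Fin n) (hab : a ≠ b)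
    (ha : v a ≠ 0) (hb : v b ≠ 0) : 2 ≤ hammingNorm v := by
  unfold hammingNorm
  have hsub : ({a, b} : Finset (Fin n)) ⊆ Finset.univ.filter (fun i => v i ≠ 0) := by
    intro j hj
    simp only [Finset.mem_insert, Finset.mem_singleton] at hj
    rcases hj with rfl | rfl <;> simp [Finset.mem_filter, ha, hb]
  calc 2 = ({a, b} : Finset (Fin n)).card := (Finset.card_pair hab).symm
    _ ≤ _ := Finset.card_le_card hsub

lemma hammingNorm_single_le {n : ℕ} (p : Fin n) :
    hammingNorm (Pi.single p 1 : Fin n → ZMod 2) ≤ 1 := by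
  unfold hammingNorm
  have : Finset.univ.filter (fun i => (Pi.single p 1 : Fin n → ZMod 2) i ≠ 0) ⊆ ({p} : Finset (Fin n)) := by
    intro j hj
    simp only [Finset.mem_filter, Finset.mem_univ, true_and, Pi.single_apply] at hj
    simp only [Finset.mem_singleton]
    by_contra h
    rw [if_neg h] at hj
    exact hj rfl
  simpa using Finset.card_le_card this

lemma add_two_le_two_pow : ∀ i : ℕ, 2 ≤ i → i + 2 ≤ 2 ^ i := by
  intro i hi
  induction i with
  | zero => omega
  | succ j ih =>
    rcases Nat.lt_or_ge j 2 with h | h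
    · interval_cases j
      · omega
      · norm_num
    · have := ih h
      rw [pow_succ]
      omega

end Aux

/-- For `i ≥ 2` and `n ≥ 2^i`, there exists a binary `[n, n−i, 2]` LCD code; consequently
`LCD[n, n−i] = 2`. -/
theorem lcd_codim (n i : ℕ) (hi : 2 ≤ i) (hn : 2 ^ i ≤ n) :
    (∃ C : Submodule (ZMod 2) (Fin n → ZMod 2),
      Module.finrank (ZMod 2) ↥C = n - i ∧ hasMinDist C 2 ∧ isLCD C) ∧
    LCDmax n (n - i) = 2 := by
  set k := n - i with hk
  set t := i - i % 2 with ht'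
  have hin : i ≤ n := le_trans (Nat.le_of_lt (Nat.lt_two_pow_self (n := i))) hn
  have hi2 : i + 2 ≤ 2 ^ i := add_two_le_two_pow i hi
  have hk2 : 2 ≤ k := by omega
  have hkn : k ≤ n := by omega
  have ht2 : 2 ≤ t := by omega
  have hkt : k + t ≤ n := by omega
  have htE : Even t := ⟨i / 2, by omega⟩
  set C := LinearMap.range (enc n k t) with hC
  have hinj := enc_inj (n := n) (k := k) (t := t) hkn
  have hrank : Module.finrank (ZMod 2) ↥C = n - i := by
    rw [hC, LinearMap.finrank_range_of_inj hinj, Module.finrank_fin_fun]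
  -- lower bound on weights
  have hlow : ∀ v ∈ C, v ≠ 0 → 2 ≤ hammingNorm v := by
    rintro v hv hv0
    obtain ⟨x, rfl⟩ := hv
    have hx : x ≠ 0 := by rintro rfl; simp at hv0
    obtain ⟨m, hm⟩ := Function.ne_iff.mp hx
    simp only [Pi.zero_apply] at hm
    by_cases hone : ∀ m', m' ≠ m → x m' = 0
    · have hsum : ∑ m', x m' = x m :=
        Finset.sum_eq_single m (fun b _ hb => hone b hb) (by simp)
      refine two_le_hammingNorm _ ⟨m, lt_of_lt_of_le m.isLt hkn⟩ ⟨k, by omega⟩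
        (Fin.ne_of_val_ne (Nat.ne_of_lt m.isLt)) ?_ ?_
      · simpa [encf, m.isLt] using hm
      · have h2 : k < k + t := by omega
        simpa [encf, h2, hsum] using hm
    · push_neg at hone
      obtain ⟨m', hm'1, hm'2⟩ := hone
      refine two_le_hammingNorm _ ⟨m, lt_of_lt_of_le m.isLt hkn⟩
        ⟨m', lt_of_lt_of_le m'.isLt hkn⟩
        (Fin.ne_of_val_ne (fun h => hm'1 (Fin.val_injective h.symm))) ?_ ?_
      · simpa [encf, m.isLt] using hm
      · simpa [encf, m'.isLt] using hm'2
  -- the weight-2 codeword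
  have h0k : 0 < k := by omega
  have h1k : 1 < k := hk2
  set x2 : Fin k → ZMod 2 := Pi.single ⟨0, h0k⟩ 1 + Pi.single ⟨1, h1k⟩ 1 with hx2
  have hsum2 : ∑ m', x2 m' = 0 := by
    rw [hx2]
    simp only [Pi.add_apply]
    rw [Finset.sum_add_distrib, Fintype.sum_pi_single', Fintype.sum_pi_single']
    decide
  have hval : ∀ j : Fin n, enc n k t x2 j = if (j : ℕ) = 0 ∨ (j : ℕ) = 1 then 1 else 0 := by
    intro j
    by_cases hj : (j : ℕ) < k
    · simp only [enc_apply, encf, dif_pos hj, hx2, Pi.add_apply, Pi.single_apply]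
      by_cases h0 : (j : ℕ) = 0
      · simp [Fin.ext_iff, h0]
      · by_cases h1 : (j : ℕ) = 1
        · simp [Fin.ext_iff, h0, h1]
        · simp [Fin.ext_iff, h0, h1]
    · have hor : ¬((j : ℕ) = 0 ∨ (j : ℕ) = 1) := by omega
      simp only [enc_apply, encf, dif_neg hj, hor, if_false]
      split
      · exact hsum2
      · rfl
  have hmem2 : enc n k t x2 ∈ C := ⟨x2, rfl⟩
  have hne2 : enc n k t x2 ≠ 0 := by
    intro h
    have h0 := congrFun h ⟨0, by omega⟩
    rw [hval] at h0
    simp at h0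
  have hnorm2 : hammingNorm (enc n k t x2) = 2 := by
    unfold hammingNorm
    have hset : Finset.univ.filter (fun j => enc n k t x2 j ≠ 0)
        = ({⟨0, by omega⟩, ⟨1, by omega⟩} : Finset (Fin n)) := by
      ext j
      simp only [Finset.mem_filter, Finset.mem_univ, true_and, Finset.mem_insert,
        Finset.mem_singleton, hval, Fin.ext_iff]
      by_cases hP : (j : ℕ) = 0 ∨ (j : ℕ) = 1 <;> simp [hP]
    rw [hset, Finset.card_pair (by simp [Fin.ext_iff])]
  -- LCD
  have hlcd : isLCD C := by
    rw [isLCD, eq_bot_iff]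
    rintro v ⟨hvC, hvD⟩
    obtain ⟨x, rfl⟩ := hvC
    have hx0 : x = 0 := by
      funext m
      have hrow : enc n k t (Pi.single m 1) ∈ C := ⟨_, rfl⟩
      have h := hvD _ hrow
      rw [enc_dot hkt htE, dotProduct_single] at h
      simpa using h
    rw [hx0, map_zero]
    exact Submodule.zero_mem ⊥
  have hex : ∃ C' : Submodule (ZMod 2) (Fin n → ZMod 2),
      Module.finrank (ZMod 2) ↥C' = n - i ∧ hasMinDist C' 2 ∧ isLCD C' :=
    ⟨C, hrank, ⟨hlow, enc n k t x2, hmem2, hne2, hnorm2⟩, hlcd⟩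
  refine ⟨hex, ?_⟩
  -- upper bound via pigeonhole
  have hub : ∀ d, (∃ C' : Submodule (ZMod 2) (Fin n → ZMod 2),
      Module.finrank (ZMod 2) ↥C' = n - i ∧ hasMinDist C' d ∧ isLCD C') → d ≤ 2 := by
    rintro d ⟨D, hDrank, hDmin, -⟩
    haveI : Finite ((Fin n → ZMod 2) ⧸ D) :=
      Finite.of_surjective _ (Submodule.mkQ_surjective D)
    haveI := Fintype.ofFinite ((Fin n → ZMod 2) ⧸ D)
    have hqrank : Module.finrank (ZMod 2) ((Fin n → ZMod 2) ⧸ D) = i := by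
      have h := Submodule.finrank_quotient_add_finrank D
      rw [hDrank, Module.finrank_fin_fun] at h
      omega
    have hcard : Fintype.card ((Fin n → ZMod 2) ⧸ D) = 2 ^ i := by
      rw [Module.card_eq_pow_finrank (K := ZMod 2), hqrank, ZMod.card]
    set u : Fin (n+1) → (Fin n → ZMod 2) := fun j =>
      if h : (j : ℕ) < n then Pi.single ⟨j, h⟩ 1 else 0 with hu
    obtain ⟨a, b, hab, hfab⟩ := Fintype.exists_ne_map_eq_of_card_lt
      (fun j => Submodule.Quotient.mk (p := D) (u j))
      (by rw [hcard, Fintype.card_fin]; omega)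
    have hmemD : u a - u b ∈ D := (Submodule.Quotient.eq D).mp hfab
    have hvalne : (a : ℕ) ≠ (b : ℕ) := fun h => hab (Fin.ext h)
    have hne : u a - u b ≠ 0 := by
      rw [sub_ne_zero, hu]
      by_cases ha : (a : ℕ) < n <;> by_cases hb : (b : ℕ) < n
      · simp only [dif_pos ha, dif_pos hb]
        intro h
        have h0 := congrFun h ⟨a, ha⟩
        simp [Pi.single_apply, Fin.ext_iff, hvalne] at h0
      · simp only [dif_pos ha, dif_neg hb]
        intro h
        have h0 := congrFun h ⟨a, ha⟩
        simp [Pi.single_apply] at h0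
      · simp only [dif_neg ha, dif_pos hb]
        intro h
        have h0 := congrFun h ⟨b, hb⟩
        simp [Pi.single_apply] at h0
      · exact absurd (Fin.ext (by omega : (a : ℕ) = (b : ℕ))) hab
    have hnorm : hammingNorm (u a - u b) ≤ 2 := by
      have h1 : ∀ j : Fin (n+1), hammingNorm (u j) ≤ 1 := by
        intro j
        rw [hu]
        by_cases h : (j : ℕ) < n
        · simpa [dif_pos h] using hammingNorm_single_le (⟨j, h⟩ : Fin n)
        · simp [dif_neg h]
      calc hammingNorm (u a - u b) = hammingDist (u a) (u b) :=
            by rw [hammingDist_comm, hammingDist_eq_hammingNorm, neg_add_eq_sub]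
        _ ≤ hammingDist (u a) 0 + hammingDist 0 (u b) := hammingDist_triangle _ _ _
        _ = hammingNorm (u a) + hammingNorm (u b) := by
            rw [hammingDist_zero_right, hammingDist_comm, hammingDist_zero_right]
        _ ≤ 1 + 1 := Nat.add_le_add (h1 a) (h1 b)
    exact le_trans (hDmin.1 _ hmemD hne) hnorm
  unfold LCDmax
  apply le_antisymm
  · exact csSup_le ⟨2, hex⟩ (fun d hd => hub d hd)
  · exact le_csSup ⟨2, fun d hd => hub d hd⟩ hex
end

section
/- If k ≥ 3 is odd, then every binary [n,k] LCD code contains an [n, k−1] LCD subcode; consequently LCD[n,k] ≤ LCD[n,k−1] for any n ≥ k. -/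
open Matrix

lemma mem_dualCode {n : ℕ} {C : Submodule (ZMod 2) (Fin n → ZMod 2)}
    {v : Fin n → ZMod 2} : v ∈ dualCode C ↔ ∀ c ∈ C, v ⬝ᵥ c = 0 := Iff.rfl

/-- A symmetric matrix over `GF(2)` of odd size with zero diagonal is singular. -/
lemma det_eq_zero_of_symm_diag_zero {k : ℕ} (hodd : Odd k)
    (M : Matrix (Fin k) (Fin k) (ZMod 2)) (hsym : ∀ i j, M i j = M j i)
    (hdiag : ∀ i, M i i = 0) : M.det = 0 := by
  haveI : Fact (Nat.Prime 2) := ⟨Nat.prime_two⟩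
  rw [Matrix.det_apply]
  apply Finset.sum_ninvolution (fun σ => σ⁻¹)
  · intro σ
    have h1 : ∏ i, M (σ i) i = ∏ i, M i (σ⁻¹ i) := by
      have := Equiv.prod_comp σ (fun i => M i (σ⁻¹ i))
      simp only [Equiv.Perm.inv_def, Equiv.symm_apply_apply] at this
      exact this
    have h2 : ∏ i, M i (σ⁻¹ i) = ∏ i, M (σ⁻¹ i) i :=
      Finset.prod_congr rfl fun i _ => hsym _ _
    rw [Equiv.Perm.sign_inv, ← h2, ← h1, ← smul_add, CharTwo.add_self_eq_zero, smul_zero]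
  · intro σ hne heq
    have hσ2 : σ ^ 2 ^ 1 = 1 := by
      rw [pow_one, sq, ← heq]
      nth_rewrite 2 [heq]
      exact inv_mul_cancel σ
    have hcard : ¬ (2 ∣ Fintype.card (Fin k)) := by
      rw [Fintype.card_fin]
      exact fun h => (Nat.not_even_iff_odd.mpr hodd) (even_iff_two_dvd.mpr h)
    obtain ⟨a, ha⟩ := Equiv.Perm.exists_fixed_point_of_prime hcard hσ2
    apply hne
    have : ∏ i, M (σ i) i = 0 :=
      Finset.prod_eq_zero (Finset.mem_univ a) (by rw [ha, hdiag])
    rw [this, smul_zero]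
  · intro σ; exact Finset.mem_univ _
  · intro σ; exact inv_inv σ

lemma sum_dotProduct' {n : ℕ} {ι : Type*} (s : Finset ι) (f : ι → (Fin n → ZMod 2))
    (v : Fin n → ZMod 2) : (∑ i ∈ s, f i) ⬝ᵥ v = ∑ i ∈ s, f i ⬝ᵥ v := by
  simp only [dotProduct, Finset.sum_apply, Finset.sum_mul]
  exact Finset.sum_comm

/-- An LCD code of odd dimension contains a codeword of odd weight. -/
lemma exists_self_dot_one {n k : ℕ} (hodd : Odd k)
    (C : Submodule (ZMod 2) (Fin n → ZMod 2))
    (hC : Module.finrank (ZMod 2) C = k) (hL : isLCD C) :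
    ∃ e ∈ C, e ⬝ᵥ e = 1 := by
  by_contra hcon
  push_neg at hcon
  have hzero : ∀ e ∈ C, e ⬝ᵥ e = 0 := by
    intro e he
    have h := hcon e he
    revert h
    generalize e ⬝ᵥ e = x
    revert x; decide
  let b := Module.finBasisOfFinrankEq (ZMod 2) C hC
  set M : Matrix (Fin k) (Fin k) (ZMod 2) :=
    fun i j => ((b i : Fin n → ZMod 2) ⬝ᵥ (b j : Fin n → ZMod 2)) with hMdef
  have hsym : ∀ i j, M i j = M j i := fun i j => dotProduct_comm _ _
  have hdet : M.det = 0 :=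
    det_eq_zero_of_symm_diag_zero hodd M hsym (fun i => hzero _ (b i).2)
  obtain ⟨x, hx0, hxM⟩ := (Matrix.exists_mulVec_eq_zero_iff).mpr hdet
  set w : C := ∑ i, x i • b i with hw
  have hwb : ∀ j, (w : Fin n → ZMod 2) ⬝ᵥ (b j : Fin n → ZMod 2) = 0 := by
    intro j
    have hcoe : (w : Fin n → ZMod 2) = ∑ i, x i • (b i : Fin n → ZMod 2) := by
      simp [hw]
    rw [hcoe, sum_dotProduct']
    have hterm : ∀ i, (x i • (b i : Fin n → ZMod 2)) ⬝ᵥ (b j : Fin n → ZMod 2)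
        = M j i * x i := by
      intro i
      rw [smul_dotProduct, smul_eq_mul, mul_comm, hMdef]
      rw [dotProduct_comm]
    rw [Finset.sum_congr rfl (fun i _ => hterm i)]
    have := congrFun hxM j
    simpa [Matrix.mulVec, dotProduct] using this
  have hwd : (w : Fin n → ZMod 2) ∈ dualCode C := by
    rw [mem_dualCode]
    intro c hc
    rw [dotProduct_comm]
    have hc' : (⟨c, hc⟩ : C) = ∑ j, b.repr ⟨c, hc⟩ j • b j := (b.sum_repr _).symm
    have hcc : c = ∑ j, b.repr ⟨c, hc⟩ j • (b j : Fin n → ZMod 2) := by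
      have := congrArg (Subtype.val) hc'
      simpa only [Submodule.coe_sum, Submodule.coe_smul] using this
    rw [hcc, sum_dotProduct']
    apply Finset.sum_eq_zero
    intro j _
    rw [smul_dotProduct, dotProduct_comm, hwb j, smul_zero]
  have hne : w ≠ 0 := by
    intro h0
    apply hx0
    funext i
    exact Fintype.linearIndependent_iff.mp b.linearIndependent x (by rw [← hw, h0]) i
  apply hne
  have hL' : C ⊓ dualCode C = ⊥ := hL
  have hmem : (w : Fin n → ZMod 2) ∈ C ⊓ dualCode C := ⟨w.2, hwd⟩
  rw [hL', Submodule.mem_bot] at hmem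
  exact Subtype.ext hmem

/-- The key construction: cutting down an odd-dimensional LCD code by a codeword of
odd weight produces an LCD subcode of codimension one. -/
lemma exists_lcd_subcode {n k : ℕ} (hodd : Odd k)
    (C : Submodule (ZMod 2) (Fin n → ZMod 2))
    (hC : Module.finrank (ZMod 2) C = k) (hL : isLCD C) :
    ∃ D : Submodule (ZMod 2) (Fin n → ZMod 2),
      D ≤ C ∧ Module.finrank (ZMod 2) D = k - 1 ∧ isLCD D := by
  obtain ⟨e, he, hee⟩ := exists_self_dot_one hodd C hC hL
  let f : C →ₗ[ZMod 2] ZMod 2 :=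
    { toFun := fun c => (c : Fin n → ZMod 2) ⬝ᵥ e
      map_add' := fun a b => by simp [add_dotProduct]
      map_smul' := fun r a => by simp [smul_dotProduct] }
  refine ⟨(LinearMap.ker f).map C.subtype, Submodule.map_subtype_le _ _, ?_, ?_⟩
  · have h1 := Submodule.finrank_map_subtype_eq C (LinearMap.ker f)
    have h2 := LinearMap.finrank_range_add_finrank_ker f
    have hr : LinearMap.range f = ⊤ := by
      rw [eq_top_iff]
      intro x _
      have h1mem : (1 : ZMod 2) ∈ LinearMap.range f := ⟨⟨e, he⟩, hee⟩
      have := (LinearMap.range f).smul_mem x h1mem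
      simpa using this
    rw [hr, finrank_top, hC] at h2
    have hone : Module.finrank (ZMod 2) (ZMod 2) = 1 := Module.finrank_self _
    omega
  · have hL' : C ⊓ dualCode C = ⊥ := hL
    show _ ⊓ _ = ⊥
    rw [eq_bot_iff]
    rintro v ⟨hvD, hvdual⟩
    have hvC : v ∈ C := Submodule.map_subtype_le _ _ hvD
    have hve : v ⬝ᵥ e = 0 := by
      rcases hvD with ⟨u, hu, rfl⟩
      exact LinearMap.mem_ker.mp hu
    have hvCdual : v ∈ dualCode C := by
      rw [mem_dualCode]
      intro c hc
      have hc' : c - (c ⬝ᵥ e) • e ∈ C := C.sub_mem hc (C.smul_mem _ he)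
      have hc'e : (c - (c ⬝ᵥ e) • e) ⬝ᵥ e = 0 := by
        rw [sub_dotProduct, smul_dotProduct, hee, smul_eq_mul, mul_one,
          sub_self]
      have hmemD : c - (c ⬝ᵥ e) • e ∈ (LinearMap.ker f).map C.subtype :=
        ⟨⟨_, hc'⟩, LinearMap.mem_ker.mpr hc'e, rfl⟩
      have h1 : v ⬝ᵥ (c - (c ⬝ᵥ e) • e) = 0 := hvdual _ hmemD
      rw [dotProduct_sub, dotProduct_smul, hve, smul_zero, sub_zero] at h1
      exact h1
    have hmem : v ∈ C ⊓ dualCode C := ⟨hvC, hvCdual⟩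
    rw [hL'] at hmem
    exact hmem

/-- Every nonzero code has a minimum distance. -/
lemma exists_hasMinDist {n : ℕ} (D : Submodule (ZMod 2) (Fin n → ZMod 2))
    (hD : D ≠ ⊥) : ∃ d, hasMinDist D d := by
  obtain ⟨v, hv, hvne⟩ := Submodule.exists_mem_ne_zero_of_ne_bot hD
  have hne : {m | ∃ v ∈ D, v ≠ 0 ∧ hammingNorm v = m}.Nonempty :=
    ⟨hammingNorm v, v, hv, hvne, rfl⟩
  refine ⟨sInf {m | ∃ v ∈ D, v ≠ 0 ∧ hammingNorm v = m}, ?_, Nat.sInf_mem hne⟩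
  intro u hu hune
  exact Nat.sInf_le ⟨u, hu, hune, rfl⟩

/-- If `k ≥ 3` is odd, every binary `[n,k]` LCD code contains an `[n, k−1]` LCD subcode;
consequently `LCD[n,k] ≤ LCD[n,k−1]` for any `n ≥ k`. -/
theorem lcd_subcode_odd (n k : ℕ) (hk : 3 ≤ k) (hodd : Odd k) (hn : k ≤ n) :
    (∀ C : Submodule (ZMod 2) (Fin n → ZMod 2),
      Module.finrank (ZMod 2) ↥C = k → isLCD C →
      ∃ D : Submodule (ZMod 2) (Fin n → ZMod 2),
        D ≤ C ∧ Module.finrank (ZMod 2) ↥D = k - 1 ∧ isLCD D) ∧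
    LCDmax n k ≤ LCDmax n (k - 1) := by
  have hmain : ∀ C : Submodule (ZMod 2) (Fin n → ZMod 2),
      Module.finrank (ZMod 2) ↥C = k → isLCD C →
      ∃ D : Submodule (ZMod 2) (Fin n → ZMod 2),
        D ≤ C ∧ Module.finrank (ZMod 2) ↥D = k - 1 ∧ isLCD D :=
    fun C hC hL => exists_lcd_subcode hodd C hC hL
  refine ⟨hmain, ?_⟩
  have hbdd : BddAbove {d | ∃ C : Submodule (ZMod 2) (Fin n → ZMod 2),
      Module.finrank (ZMod 2) ↥C = k - 1 ∧ hasMinDist C d ∧ isLCD C} := by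
    refine ⟨n, ?_⟩
    rintro d ⟨C, _, ⟨_, v, _, _, hvd⟩, _⟩
    calc d = hammingNorm v := hvd.symm
      _ ≤ Fintype.card (Fin n) := hammingNorm_le_card_fintype
      _ = n := Fintype.card_fin n
  apply csSup_le'
  rintro d ⟨C, hCk, hCd, hCL⟩
  obtain ⟨D, hDC, hDk, hDL⟩ := hmain C hCk hCL
  have hDne : D ≠ ⊥ := by
    intro h
    rw [h, finrank_bot] at hDk
    omega
  obtain ⟨d', hd'⟩ := exists_hasMinDist D hDne
  have hdd' : d ≤ d' := by
    obtain ⟨_, v, hvD, hvne, hvd⟩ := hd'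
    rw [← hvd]
    exact hCd.1 v (hDC hvD) hvne
  exact le_trans hdd' (le_csSup hbdd ⟨D, hDk, hd', hDL⟩)
end

section
/- Let n be even and i ≥ 0 with n ≥ 6i. Then for every k ≥ 1 there is no binary [n, k, n−2i] LCD code. -/
open Matrix

section Aux
open Finset symmDiff


lemma zmod2_cases_s17 (x : ZMod 2) : x = 0 ∨ x = 1 := by revert x; decide

lemma supp_eq {n : ℕ} (u : Fin n → ZMod 2) :
    hammingNorm u = (Finset.univ.filter (fun j => u j = 1)).card := by
  unfold hammingNorm
  congr 1
  ext j
  simp only [mem_filter, Finset.mem_univ, true_and]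
  rcases zmod2_cases_s17 (u j) with h | h <;> simp [h]

lemma dot_eq_s17 {n : ℕ} (u v : Fin n → ZMod 2) :
    u ⬝ᵥ v = (((Finset.univ.filter (fun j => u j = 1)) ∩
      (Finset.univ.filter (fun j => v j = 1))).card : ZMod 2) := by
  rw [dotProduct, Finset.card_eq_sum_ones, Nat.cast_sum]
  rw [← Finset.sum_filter_add_sum_filter_not Finset.univ
    (fun j => u j = 1 ∧ v j = 1) (fun j => u j * v j)]
  have h1 : (Finset.univ.filter (fun j => u j = 1)) ∩
      (Finset.univ.filter (fun j => v j = 1)) =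
      Finset.univ.filter (fun j => u j = 1 ∧ v j = 1) := by
    ext j; simp [and_assoc]
  rw [h1]
  have h2 : ∀ j ∈ Finset.univ.filter (fun j => u j = 1 ∧ v j = 1),
      u j * v j = ((1 : ℕ) : ZMod 2) := by
    intro j hj
    simp only [mem_filter] at hj
    simp [hj.2.1, hj.2.2]
  have h3 : ∀ j ∈ Finset.univ.filter (fun j => ¬(u j = 1 ∧ v j = 1)),
      u j * v j = 0 := by
    intro j hj
    simp only [mem_filter] at hj
    rcases zmod2_cases_s17 (u j) with h | h
    · simp [h]
    · rcases zmod2_cases_s17 (v j) with h' | h'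
      · simp [h']
      · exact absurd ⟨h, h'⟩ hj.2
  rw [Finset.sum_congr rfl h2, Finset.sum_congr rfl h3]
  simp

lemma supp_add {n : ℕ} (u v : Fin n → ZMod 2) :
    (Finset.univ.filter (fun j => (u + v) j = 1)) =
      (Finset.univ.filter (fun j => u j = 1)) ∆
      (Finset.univ.filter (fun j => v j = 1)) := by
  ext j
  simp only [Finset.mem_symmDiff, mem_filter, Finset.mem_univ, true_and, Pi.add_apply]
  rcases zmod2_cases_s17 (u j) with h | h <;> rcases zmod2_cases_s17 (v j) with h' | h' <;>
    simp [h, h']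

lemma card_facts {n : ℕ} (A B : Finset (Fin n)) :
    (A ∪ B).card + (A ∩ B).card = A.card + B.card ∧
    (A ∆ B).card + (A ∩ B).card = (A ∪ B).card ∧
    (A ∪ B).card ≤ n := by
  refine ⟨Finset.card_union_add_card_inter A B, ?_, ?_⟩
  · have h := Finset.card_union_of_disjoint (disjoint_symmDiff_inf A B)
    have h2 : (A ∆ B) ∪ (A ⊓ B) = A ∪ B := symmDiff_sup_inf A B
    rw [h2] at h
    simpa [Finset.inf_eq_inter] using h.symm
  · simpa using Finset.card_le_univ (A ∪ B)

end Aux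

open Finset symmDiff in
/-- Let `n` be even and `i ≥ 0` with `n ≥ 6i`. Then for every `k ≥ 1` there is no binary
`[n, k, n−2i]` LCD code. -/
theorem no_lcd_even_n (n i k : ℕ) (hn : Even n) (hni : 6 * i ≤ n) (hk : 1 ≤ k) :
    ¬ ∃ C : Submodule (ZMod 2) (Fin n → ZMod 2),
      Module.finrank (ZMod 2) ↥C = k ∧ hasMinDist C (n - 2 * i) ∧ isLCD C := by
  rintro ⟨C, hrank, ⟨hlow, v, hvC, hv0, hvw⟩, hlcd⟩
  have h2 : ((2 : ℕ) : ZMod 2) = 0 := by decide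
  have hdeven : ∃ m, n - 2 * i = 2 * m := by
    obtain ⟨m, hm⟩ := hn
    exact ⟨m - i, by omega⟩
  have hvdual : ∀ c ∈ C, v ⬝ᵥ c = 0 := by
    intro c hcC
    by_cases hc0 : c = 0
    · simp [hc0]
    by_cases hcv : c = v
    · subst hcv
      rw [dot_eq_s17, Finset.inter_self, ← supp_eq, hvw]
      obtain ⟨m, hm⟩ := hdeven
      rw [hm, Nat.cast_mul, h2, zero_mul]
    · have hvc : v + c ≠ 0 := by
        intro h
        apply hcv
        funext j
        have hj := congrFun h j
        simp only [Pi.add_apply, Pi.zero_apply] at hj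
        rcases zmod2_cases_s17 (v j) with h1 | h1 <;> rcases zmod2_cases_s17 (c j) with h2 | h2 <;>
          simp_all
      have hwc : n - 2 * i ≤ hammingNorm c := hlow c hcC hc0
      have hws : n - 2 * i ≤ hammingNorm (v + c) := hlow (v + c) (C.add_mem hvC hcC) hvc
      rw [supp_eq] at hvw hwc hws
      rw [supp_add] at hws
      obtain ⟨e1, e2, e3⟩ := card_facts (Finset.univ.filter (fun j => v j = 1))
        (Finset.univ.filter (fun j => c j = 1))
      have hint : ((Finset.univ.filter (fun j => v j = 1)) ∩
          (Finset.univ.filter (fun j => c j = 1))).card = 2 * i := by omega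
      rw [dot_eq_s17, hint, Nat.cast_mul, h2, zero_mul]
  have hmem : v ∈ C ⊓ dualCode C := ⟨hvC, hvdual⟩
  rw [hlcd] at hmem
  exact hv0 ((Submodule.mem_bot _).mp hmem)
end

section
/- Let n be odd and i ≥ 0 with n > 6i + 3. Then for every k ≥ 1 there is no binary [n, k, n−2i−1] LCD code. -/
open Matrix

lemma hammingNorm_eq_sum {n : ℕ} (v : Fin n → ZMod 2) :
    hammingNorm v = ∑ j, if v j ≠ 0 then 1 else 0 := by
  simp [hammingNorm, Finset.card_filter]

lemma dot_self_eq {n : ℕ} (v : Fin n → ZMod 2) :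
    v ⬝ᵥ v = (hammingNorm v : ZMod 2) := by
  rw [hammingNorm_eq_sum, dotProduct, Nat.cast_sum]
  refine Finset.sum_congr rfl fun j _ => ?_
  have key : ∀ a : ZMod 2, a * a = if a ≠ 0 then 1 else 0 := by decide
  rw [key (v j)]
  split <;> simp

lemma triple_weight_le {n : ℕ} (u v : Fin n → ZMod 2) :
    hammingNorm u + hammingNorm v + hammingNorm (u + v) ≤ 2 * n := by
  rw [hammingNorm_eq_sum, hammingNorm_eq_sum, hammingNorm_eq_sum,
    ← Finset.sum_add_distrib, ← Finset.sum_add_distrib]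
  calc ∑ j, ((if u j ≠ 0 then 1 else 0) + (if v j ≠ 0 then 1 else 0)
        + (if (u + v) j ≠ 0 then 1 else 0))
      ≤ ∑ _j : Fin n, 2 := by
        refine Finset.sum_le_sum fun j _ => ?_
        have : ∀ a b : ZMod 2,
            (if a ≠ 0 then 1 else 0) + (if b ≠ 0 then 1 else 0)
              + (if a + b ≠ 0 then 1 else 0) ≤ 2 := by decide
        simpa using this (u j) (v j)
    _ = 2 * n := by simp [mul_comm]

/-- Let `n` be odd and `i ≥ 0` with `n > 6i + 3`. Then for every `k ≥ 1` there is no binary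
`[n, k, n−2i−1]` LCD code. -/
theorem no_lcd_odd_n (n i k : ℕ) (hn : Odd n) (hni : 6 * i + 3 < n) (hk : 1 ≤ k) :
    ¬ ∃ C : Submodule (ZMod 2) (Fin n → ZMod 2),
      Module.finrank (ZMod 2) ↥C = k ∧ hasMinDist C (n - 2 * i - 1) ∧ isLCD C := by
  rintro ⟨C, hrank, ⟨hlb, v, hvC, hv0, hvd⟩, hlcd⟩
  -- d is even and positive
  obtain ⟨m, hm⟩ := hn
  have hd2 : 2 ∣ n - 2 * i - 1 := by omega
  rcases Nat.lt_or_ge k 2 with hk1 | hk2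
  · -- k = 1 : the weight-d codeword is self-orthogonal and spans C
    have hk1 : k = 1 := by omega
    subst hk1
    have hv' : (⟨v, hvC⟩ : ↥C) ≠ 0 := by
      simpa [Submodule.mk_eq_zero] using hv0
    have hall : ∀ w : ↥C, ∃ c : ZMod 2, c • (⟨v, hvC⟩ : ↥C) = w :=
      (finrank_eq_one_iff_of_nonzero' _ hv').mp hrank
    have hmem : v ∈ C ⊓ dualCode C := by
      refine ⟨hvC, fun c hc => ?_⟩
      obtain ⟨a, ha⟩ := hall ⟨c, hc⟩
      have hca : c = a • v := by
        have := congrArg (Subtype.val) ha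
        simpa using this.symm
      have hdz : ((hammingNorm v : ℕ) : ZMod 2) = 0 := by
        rw [hvd]
        exact (ZMod.natCast_eq_zero_iff _ 2).mpr hd2
      rw [hca, dotProduct_smul, dot_self_eq, hdz, smul_zero]
    rw [isLCD] at hlcd
    rw [hlcd] at hmem
    exact hv0 (by simpa using hmem)
  · -- k ≥ 2 : find a second codeword and contradict 3d ≤ 2n
    obtain ⟨w, hwC, hw0, hwv⟩ : ∃ w ∈ C, w ≠ 0 ∧ w ≠ v := by
      by_contra h
      push_neg at h
      have hCle : C ≤ Submodule.span (ZMod 2) {v} := by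
        intro c hc
        rcases Classical.em (c = 0) with rfl | hc0
        · exact Submodule.zero_mem _
        · rcases Classical.em (c = v) with rfl | hcv
          · exact Submodule.mem_span_singleton_self _
          · exact absurd (h c hc hc0) hcv
      have h4 := Submodule.finrank_mono (R := ZMod 2) hCle
      rw [finrank_span_singleton hv0] at h4
      rw [hrank] at h4
      omega
    have hvw : v + w ≠ 0 := by
      intro h
      apply hwv
      have : w = -v := by
        rw [eq_neg_iff_add_eq_zero, add_comm]; exact h
      rw [this]
      ext j
      simp [ZMod.neg_eq_self_mod_two]
    have h1 := hlb v hvC hv0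
    have h2 := hlb w hwC hw0
    have h3 := hlb (v + w) (C.add_mem hvC hwC) hvw
    have hb := triple_weight_le v w
    omega
end
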